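/- Refined Cauchy-Schwarz: for any vectors x, y, z in a complex Hilbert space H, |⟨x,y⟩|‖z‖² ≤ |⟨x,z⟩|·|⟨z,y⟩| + √(‖x‖²‖z‖² − |⟨x,z⟩|²)·√(‖y‖²‖z‖² − |⟨y,z⟩|²) ≤ ‖z‖²‖x‖‖y‖. -/

import Mathlib

open scoped InnerProductSpace

private lemma sq2 (a b c d : ℝ) (ha : 0 ≤ a) (hb : 0 ≤ b) (hc : 0 ≤ c) (hd : 0 ≤ d) :
    a * c + b * d ≤ Real.sqrt (a ^ 2 + b ^ 2) * Real.sqrt (c ^ 2 + d ^ 2) := by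
  rw [← Real.sqrt_mul (by positivity)]
  rw [show a * c + b * d = Real.sqrt ((a * c + b * d) ^ 2) by
    rw [Real.sqrt_sq (by positivity)]]
  apply Real.sqrt_le_sqrt
  nlinarith [sq_nonneg (a * d - b * c)]

theorem refined_cauchy_schwarz {H : Type*} [NormedAddCommGroup H]
    [InnerProductSpace ℂ H] [CompleteSpace H] (x y z : H) :
    ‖⟪x, y⟫_ℂ‖ * ‖z‖ ^ 2 ≤
      ‖⟪x, z⟫_ℂ‖ * ‖⟪z, y⟫_ℂ‖ +
        Real.sqrt (‖x‖ ^ 2 * ‖z‖ ^ 2 - ‖⟪x, z⟫_ℂ‖ ^ 2) *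
          Real.sqrt (‖y‖ ^ 2 * ‖z‖ ^ 2 - ‖⟪y, z⟫_ℂ‖ ^ 2) ∧
    ‖⟪x, z⟫_ℂ‖ * ‖⟪z, y⟫_ℂ‖ +
        Real.sqrt (‖x‖ ^ 2 * ‖z‖ ^ 2 - ‖⟪x, z⟫_ℂ‖ ^ 2) *
          Real.sqrt (‖y‖ ^ 2 * ‖z‖ ^ 2 - ‖⟪y, z⟫_ℂ‖ ^ 2) ≤
      ‖z‖ ^ 2 * ‖x‖ * ‖y‖ := by
  have hCSx : ‖⟪x, z⟫_ℂ‖ ≤ ‖x‖ * ‖z‖ := norm_inner_le_norm x z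
  have hCSy : ‖⟪y, z⟫_ℂ‖ ≤ ‖y‖ * ‖z‖ := norm_inner_le_norm y z
  have hzy : ‖⟪z, y⟫_ℂ‖ = ‖⟪y, z⟫_ℂ‖ := by rw [← inner_conj_symm y z, RCLike.norm_conj]
  have hbx : 0 ≤ ‖x‖ ^ 2 * ‖z‖ ^ 2 - ‖⟪x, z⟫_ℂ‖ ^ 2 := by nlinarith [norm_nonneg (⟪x, z⟫_ℂ)]
  have hby : 0 ≤ ‖y‖ ^ 2 * ‖z‖ ^ 2 - ‖⟪y, z⟫_ℂ‖ ^ 2 := by nlinarith [norm_nonneg (⟪y, z⟫_ℂ)]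
  constructor
  · rcases eq_or_ne z 0 with rfl | hz
    · simp
    have hz2 : (0:ℝ) < ‖z‖ ^ 2 := pow_pos (norm_pos_iff.mpr hz) 2
    have hz2c : ((‖z‖ : ℂ) ^ 2) ≠ 0 := by
      simp [pow_eq_zero_iff, norm_eq_zero, hz]
    set α : ℂ := ⟪z, x⟫_ℂ / (‖z‖ : ℂ) ^ 2 with hα
    set β : ℂ := ⟪z, y⟫_ℂ / (‖z‖ : ℂ) ^ 2 with hβ
    set x' := x - α • z with hx'
    set y' := y - β • z with hy'
    have hx'z : ⟪x', z⟫_ℂ = 0 := by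
      simp only [hx', inner_sub_left, inner_smul_left, inner_self_eq_norm_sq_to_K, hα]
      rw [← inner_conj_symm x z]
      field_simp
      simp [hz]
    have hzy' : ⟪z, y'⟫_ℂ = 0 := by
      simp only [hy', inner_sub_right, inner_smul_right, inner_self_eq_norm_sq_to_K, hβ]
      field_simp
      simp [hz]
    have hdec : ⟪x, y⟫_ℂ * (‖z‖ : ℂ) ^ 2 = ⟪x', y'⟫_ℂ * (‖z‖ : ℂ) ^ 2 + ⟪x, z⟫_ℂ * ⟪z, y⟫_ℂ := by
      have hx'y : ⟪x', y⟫_ℂ = ⟪x', y'⟫_ℂ := by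
        have : ⟪x', z⟫_ℂ = 0 := hx'z
        simp [hy', inner_sub_right, inner_smul_right, this]
      have : ⟪x, y⟫_ℂ = ⟪x', y⟫_ℂ + (starRingEnd ℂ) α * ⟪z, y⟫_ℂ := by
        simp [hx', inner_sub_left, inner_smul_left]
        ring
      rw [this, hx'y]
      have hconj : (starRingEnd ℂ) α = ⟪x, z⟫_ℂ / (‖z‖ : ℂ) ^ 2 := by
        simp [hα, map_div₀, inner_conj_symm]
      rw [hconj]
      field_simp
      rw [mul_add, mul_div_assoc', mul_comm ((‖z‖ : ℂ) ^ 2) (⟪x, z⟫_ℂ * ⟪z, y⟫_ℂ), mul_div_assoc, div_self hz2c, mul_one]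
      ring
    have hpyth : ∀ (w : H) (γ : ℂ), ⟪w - γ • z, z⟫_ℂ = 0 →
        ‖w‖ ^ 2 = ‖w - γ • z‖ ^ 2 + ‖γ‖ ^ 2 * ‖z‖ ^ 2 := by
      intro w γ h
      have h2 := norm_add_sq_eq_norm_sq_add_norm_sq_of_inner_eq_zero (w - γ • z) (γ • z) (by
        rw [inner_smul_right, h, mul_zero])
      have h3 : w - γ • z + γ • z = w := by abel
      rw [h3, norm_smul] at h2
      linear_combination h2
    have hnx : ‖x'‖ ^ 2 * ‖z‖ ^ 2 = ‖x‖ ^ 2 * ‖z‖ ^ 2 - ‖⟪x, z⟫_ℂ‖ ^ 2 := by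
      have h1 := hpyth x α hx'z
      have hαn : ‖α‖ ^ 2 = ‖⟪x, z⟫_ℂ‖ ^ 2 / (‖z‖ ^ 2) ^ 2 := by
        rw [hα]
        rw [norm_div]
        rw [← inner_conj_symm x z, RCLike.norm_conj]
        simp [div_pow, norm_pow]
      rw [hαn] at h1
      field_simp at h1 ⊢
      nlinarith [h1]
    have hny : ‖y'‖ ^ 2 * ‖z‖ ^ 2 = ‖y‖ ^ 2 * ‖z‖ ^ 2 - ‖⟪y, z⟫_ℂ‖ ^ 2 := by
      have hy'z : ⟪y', z⟫_ℂ = 0 := by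
        rw [← inner_conj_symm y' z, hzy', map_zero]
      have h1 := hpyth y β hy'z
      have hβn : ‖β‖ ^ 2 = ‖⟪y, z⟫_ℂ‖ ^ 2 / (‖z‖ ^ 2) ^ 2 := by
        rw [hβ, norm_div]
        rw [← inner_conj_symm y z, RCLike.norm_conj]
        simp [div_pow, norm_pow]
      rw [hβn] at h1
      field_simp at h1 ⊢
      nlinarith [h1]
    have hsx : Real.sqrt (‖x‖ ^ 2 * ‖z‖ ^ 2 - ‖⟪x, z⟫_ℂ‖ ^ 2) = ‖x'‖ * ‖z‖ := by
      rw [← hnx, ← mul_pow, Real.sqrt_sq (by positivity)]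
    have hsy : Real.sqrt (‖y‖ ^ 2 * ‖z‖ ^ 2 - ‖⟪y, z⟫_ℂ‖ ^ 2) = ‖y'‖ * ‖z‖ := by
      rw [← hny, ← mul_pow, Real.sqrt_sq (by positivity)]
    rw [hsx, hsy]
    have key : ‖⟪x, y⟫_ℂ‖ * ‖z‖ ^ 2 ≤ ‖⟪x', y'⟫_ℂ‖ * ‖z‖ ^ 2 + ‖⟪x, z⟫_ℂ‖ * ‖⟪z, y⟫_ℂ‖ := by
      have := congrArg norm hdec
      rw [show ‖⟪x, y⟫_ℂ * (‖z‖ : ℂ) ^ 2‖ = ‖⟪x, y⟫_ℂ‖ * ‖z‖ ^ 2 by simp [norm_mul]] at this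
      calc ‖⟪x, y⟫_ℂ‖ * ‖z‖ ^ 2 = ‖⟪x', y'⟫_ℂ * (‖z‖ : ℂ) ^ 2 + ⟪x, z⟫_ℂ * ⟪z, y⟫_ℂ‖ := this
        _ ≤ ‖⟪x', y'⟫_ℂ * (‖z‖ : ℂ) ^ 2‖ + ‖⟪x, z⟫_ℂ * ⟪z, y⟫_ℂ‖ := norm_add_le _ _
        _ = ‖⟪x', y'⟫_ℂ‖ * ‖z‖ ^ 2 + ‖⟪x, z⟫_ℂ‖ * ‖⟪z, y⟫_ℂ‖ := by simp [norm_mul]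
    refine key.trans ?_
    have : ‖⟪x', y'⟫_ℂ‖ ≤ ‖x'‖ * ‖y'‖ := norm_inner_le_norm x' y'
    nlinarith [norm_nonneg z]
  · have h := sq2 ‖⟪x, z⟫_ℂ‖ (Real.sqrt (‖x‖ ^ 2 * ‖z‖ ^ 2 - ‖⟪x, z⟫_ℂ‖ ^ 2))
      ‖⟪y, z⟫_ℂ‖ (Real.sqrt (‖y‖ ^ 2 * ‖z‖ ^ 2 - ‖⟪y, z⟫_ℂ‖ ^ 2))
      (norm_nonneg _) (Real.sqrt_nonneg _) (norm_nonneg _) (Real.sqrt_nonneg _)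
    rw [Real.sq_sqrt hbx, Real.sq_sqrt hby] at h
    rw [hzy]
    have e1 : ‖⟪x, z⟫_ℂ‖ ^ 2 + (‖x‖ ^ 2 * ‖z‖ ^ 2 - ‖⟪x, z⟫_ℂ‖ ^ 2) = ‖x‖ ^ 2 * ‖z‖ ^ 2 := by ring
    have e2 : ‖⟪y, z⟫_ℂ‖ ^ 2 + (‖y‖ ^ 2 * ‖z‖ ^ 2 - ‖⟪y, z⟫_ℂ‖ ^ 2) = ‖y‖ ^ 2 * ‖z‖ ^ 2 := by ring
    have f1 : Real.sqrt (‖x‖ ^ 2 * ‖z‖ ^ 2) = ‖x‖ * ‖z‖ := by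
      rw [← mul_pow, Real.sqrt_sq (by positivity)]
    have f2 : Real.sqrt (‖y‖ ^ 2 * ‖z‖ ^ 2) = ‖y‖ * ‖z‖ := by
      rw [← mul_pow, Real.sqrt_sq (by positivity)]
    rw [e1, e2, f1, f2] at h
    calc _ ≤ ‖x‖ * ‖z‖ * (‖y‖ * ‖z‖) := h
      _ = ‖z‖ ^ 2 * ‖x‖ * ‖y‖ := by ring
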